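/- For every integer d ≥ 3, the variable x_{d−1,d−1} does not belong to D_∞(R_∞^{(d)}), while x_{d,0}·x_{d−1,d−1} does belong to D_∞(R_∞^{(d)}); hence the class of x_{d−1,d−1} in R_∞^{(d−1)}/D_∞(R_∞^{(d)}) is a non-trivial torsion element of this S-module. (In the paper's notation: m̄_{0,d−1} is a non-trivial torsion element of Coker(𝐃_d) ≅ H_st^‡(Λ^d H̃_ℚ).) -/

import Mathlib

open MvPolynomial

noncomputable section

/-- The index set `{(n,k) : 2 ≤ n, 0 ≤ k ≤ n}` of the variables `x_{n,k}` of `R_∞`. -/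
abbrev Idx : Type := {p : ℕ × ℕ // 2 ≤ p.1 ∧ p.2 ≤ p.1}

/-- The polynomial ring `R_∞ = ℚ[x_{n,k} : n ≥ 2, 0 ≤ k ≤ n]`. -/
abbrev Rinf : Type := MvPolynomial Idx ℚ

/-- The variable `x_{n,k}` (and `0` for out-of-range indices, which never occur below). -/
def xv (n k : ℕ) : Rinf := if h : 2 ≤ n ∧ k ≤ n then X ⟨(n, k), h⟩ else 0

/-- The derivation `D_∞` with `D_∞(x_{n,k}) = x_{n,k−1}` for `1 ≤ k ≤ n` and
`D_∞(x_{n,0}) = 0`. -/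
def Dinf : Derivation ℚ Rinf Rinf :=
  MvPolynomial.mkDerivation ℚ fun s : Idx =>
    if s.1.2 = 0 then 0 else xv s.1.1 (s.1.2 - 1)

/-- The weight `wt(x_{n,k}) = k`. -/
def wt : Idx → ℕ := fun s => s.1.2

/-- `R_∞^{(d)}`: the `ℚ`-span of the monomials of weight `d`. -/
def W (d : ℕ) : Submodule ℚ Rinf := weightedHomogeneousSubmodule ℚ wt d

lemma xv_def {n k : ℕ} (h2 : 2 ≤ n) (hk : k ≤ n) :
    xv n k = X (⟨(n, k), h2, hk⟩ : Idx) := by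
  simp [xv, h2, hk]

lemma Dinf_X (s : Idx) :
    Dinf (X s) = if s.1.2 = 0 then 0 else xv s.1.1 (s.1.2 - 1) :=
  mkDerivation_X _ _ _

lemma Dinf_xv {n k : ℕ} (h2 : 2 ≤ n) (hk1 : 1 ≤ k) (hk : k ≤ n) :
    Dinf (xv n k) = xv n (k - 1) := by
  rw [xv_def h2 hk, Dinf_X]
  split
  · next h => exfalso; simp only at h; omega
  · rfl

lemma Dinf_xv0 {n : ℕ} (h2 : 2 ≤ n) : Dinf (xv n 0) = 0 := by
  rw [xv_def h2 (by omega), Dinf_X, if_pos rfl]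

lemma Dinf_C (a : ℚ) : Dinf (C a : Rinf) = 0 := by
  have : (C a : Rinf) = algebraMap ℚ Rinf a := rfl
  rw [this, Derivation.map_algebraMap]

lemma constantCoeff_Dinf (p : Rinf) : constantCoeff (Dinf p) = 0 := by
  induction p using MvPolynomial.induction_on with
  | C a => simp [Dinf_C]
  | add p q hp hq => simp [hp, hq]
  | mul_X p s hp =>
    rw [Derivation.leibniz, smul_eq_mul, smul_eq_mul, map_add, map_mul, map_mul, Dinf_X]
    split
    · simp [hp]
    · have : constantCoeff (xv s.1.1 (s.1.2 - 1)) = 0 := by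
        rw [xv_def s.2.1 (by omega)]; simp
      simp [this, hp]

lemma coeff_single_Dinf (t : Idx) (ht : t.1.1 = t.1.2) (p : Rinf) :
    coeff (Finsupp.single t 1) (Dinf p) = 0 := by
  induction p using MvPolynomial.induction_on with
  | C a => simp [Dinf_C]
  | add p q hp hq => simp [hp, hq]
  | mul_X p s hp =>
    have hs1 := s.2.1
    have hs2 := s.2.2
    rw [Derivation.leibniz, smul_eq_mul, smul_eq_mul, coeff_add]
    have h2 : coeff (Finsupp.single t 1) (X s * Dinf p) = 0 := by
      rw [coeff_X_mul']
      split
      · next hs =>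
        rw [Finsupp.mem_support_iff, Finsupp.single_apply] at hs
        split at hs
        · next heq =>
          subst heq
          simpa [MvPolynomial.constantCoeff_eq] using constantCoeff_Dinf p
        · exact absurd rfl hs
      · rfl
    have h1 : coeff (Finsupp.single t 1) (p * Dinf (X s)) = 0 := by
      rw [Dinf_X]
      split
      · simp
      · next hne =>
        rw [xv_def s.2.1 (by omega)]
        rw [coeff_mul_X']
        rw [if_neg]
        intro hmem
        rw [Finsupp.mem_support_iff, Finsupp.single_apply] at hmem
        split at hmem
        · next heq =>
          have h1 : s.1.1 = t.1.1 := by rw [heq]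
          have h2' : s.1.2 - 1 = t.1.2 := by rw [heq]
          omega
        · exact hmem rfl
    rw [h1, h2, add_zero]

/-- For every `d ≥ 3`, the variable `x_{d−1,d−1}` is not in `D_∞(R_∞^{(d)})`, while
`x_{d,0}·x_{d−1,d−1}` is: the class of `x_{d−1,d−1}` (i.e. of `m̄_{0,d−1}`) is a non-trivial
torsion element of `R_∞^{(d−1)}/D_∞(R_∞^{(d)})`. -/
theorem statement10 (d : ℕ) (hd : 3 ≤ d) :
    xv (d - 1) (d - 1) ∉ Submodule.map Dinf.toLinearMap (W d) ∧
    xv d 0 * xv (d - 1) (d - 1) ∈ Submodule.map Dinf.toLinearMap (W d) := by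
  have h2d : 2 ≤ d := by omega
  have h2d1 : 2 ≤ d - 1 := by omega
  constructor
  · rintro ⟨q, hq, hDq⟩
    have h := coeff_single_Dinf ⟨(d-1, d-1), h2d1, le_rfl⟩ rfl q
    have hDq' : Dinf q = xv (d-1) (d-1) := hDq
    rw [hDq', xv_def h2d1 le_rfl, coeff_X, if_pos rfl] at h
    exact one_ne_zero h
  · set a : ℕ → Rinf := fun i => xv d i * xv (d-1) (d-1-i) with ha
    set t : ℕ → Rinf := fun j => xv d j * xv (d-1) (d-j) with htd
    have hDt : ∀ j, j + 1 < d → Dinf (t (j+1)) = a j + a (j+1) := by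
      intro j hj
      have e1 : Dinf (xv d (j+1)) = xv d j := by
        have := Dinf_xv (n := d) (k := j+1) h2d (by omega) (by omega)
        simpa using this
      have e2 : Dinf (xv (d-1) (d-(j+1))) = xv (d-1) (d-1-(j+1)) := by
        rw [Dinf_xv h2d1 (by omega) (by omega)]
        congr 1
        omega
      rw [htd]; simp only
      rw [Derivation.leibniz, smul_eq_mul, smul_eq_mul, e1, e2]
      rw [ha]; simp only
      have hn : d - (j+1) = d - 1 - j := by omega
      rw [hn]; ring
    have hDtd : Dinf (t d) = a (d-1) := by
      have h0 : d - d = 0 := by omega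
      rw [htd]; simp only [h0]
      rw [Derivation.leibniz, smul_eq_mul, smul_eq_mul, Dinf_xv0 h2d1,
        Dinf_xv h2d (by omega) le_rfl]
      rw [ha]; simp only
      have hn : d - 1 - (d-1) = 0 := by omega
      rw [hn]; ring
    have key : ∀ m, m ≤ d - 1 →
        ∑ j ∈ Finset.range m, ((-1:ℚ)^j) • Dinf (t (j+1))
          = a 0 - ((-1:ℚ)^m) • a m := by
      intro m
      induction m with
      | zero => intro _; simp
      | succ m ih =>
        intro hm
        rw [Finset.sum_range_succ, ih (by omega), hDt m (by omega), pow_succ]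
        module
    obtain ⟨e, he⟩ : ∃ e, d = e + 1 := ⟨d-1, by omega⟩
    have hsum : ∑ j ∈ Finset.range d, ((-1:ℚ)^j) • Dinf (t (j+1)) = a 0 := by
      conv_lhs => rw [he]
      rw [Finset.sum_range_succ]
      have he1 : e = d - 1 := by omega
      rw [he1, key (d-1) le_rfl]
      have hdd : d - 1 + 1 = d := by omega
      rw [hdd, hDtd]
      module
    refine ⟨∑ j ∈ Finset.range d, ((-1:ℚ)^j) • t (j+1), ?_, ?_⟩
    · apply Submodule.sum_mem
      intro j hj
      rw [Finset.mem_range] at hj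
      apply Submodule.smul_mem
      rw [htd]; simp only
      rw [xv_def h2d (by omega), xv_def h2d1 (by omega)]
      rw [W, mem_weightedHomogeneousSubmodule]
      have hwh := (isWeightedHomogeneous_X ℚ wt ⟨(d, j+1), h2d, by omega⟩).mul
        (isWeightedHomogeneous_X ℚ wt ⟨(d-1, d-(j+1)), h2d1, by omega⟩)
      convert hwh using 1
      simp only [wt]
      omega
    · rw [map_sum]
      simp only [LinearMap.map_smul]
      have hcoe : ∀ x : Rinf, Dinf.toLinearMap x = Dinf x := fun _ => rfl
      simp only [hcoe]
      rw [hsum, ha]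
      simp only
      congr 1

end
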